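/- Let β_x be a KL-function of the form β_x(s,t) ≤ μ(s)·φ(t) with μ a K-function and φ an L-function, let α_w, α_v be K-functions, and fix η ∈ (0,1), M₀, M_w, M_v ≥ 0. Set s̄ = β_x(M₀,0) + (α_w(M_w)+α_v(M_v))/(1-η), and suppose T satisfies μ(s)·φ(T) ≤ η·s for all s ∈ [0, s̄]. Suppose a sequence of error bounds satisfies: e₀ ≤ β_x(M₀,0) + D where D := α_w(M_w)+α_v(M_v), and e_{k+1} ≤ μ(e_k)·φ(T) + D whenever e_k ≤ s̄. Then e_k ≤ η^k·e₀ + D/(1-η) ≤ s̄ for all k ≥ 0, and e_k converges to a value at most D/(1-η). -/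

import Mathlib

open Set Filter

/-- A K-function: continuous, zero at zero, strictly increasing on `[0, ∞)`. -/
def IsKFun (f : ℝ → ℝ) : Prop :=
  ContinuousOn f (Set.Ici 0) ∧ f 0 = 0 ∧ StrictMonoOn f (Set.Ici 0)

/-- An L-function: continuous, nonincreasing, tending to 0 at infinity. -/
def IsLFun (f : ℝ → ℝ) : Prop :=
  ContinuousOn f (Set.Ici 0) ∧ AntitoneOn f (Set.Ici 0) ∧ Tendsto f atTop (nhds 0)

/-- A KL-function. -/
def IsKLFun (β : ℝ → ℝ → ℝ) : Prop :=
  (∀ t ≥ (0 : ℝ), IsKFun fun s => β s t) ∧ (∀ s ≥ (0 : ℝ), IsLFun fun t => β s t)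

/-- induction step of the FIE-to-MHE stability link: with
`s̄ = β_x(M₀,0) + (α_w(M_w)+α_v(M_v))/(1-η)` and horizon `T` such that
`μ(s)·φ(T) ≤ η·s` on `[0,s̄]`, the windowed error bounds satisfy
`e_k ≤ η^k e₀ + D/(1-η) ≤ s̄` for all `k`, and `limsup e_k ≤ D/(1-η)`. -/
theorem fie_to_mhe_error_recursion (μ φ : ℝ → ℝ) (hμ : IsKFun μ) (hφ : IsLFun φ)
    (βx : ℝ → ℝ → ℝ) (hβx : IsKLFun βx)
    (hβμφ : ∀ s ≥ (0 : ℝ), ∀ t ≥ (0 : ℝ), βx s t ≤ μ s * φ t)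
    (αw αv : ℝ → ℝ) (hαw : IsKFun αw) (hαv : IsKFun αv)
    (η M₀ Mw Mv D sbar T : ℝ) (hη : η ∈ Set.Ioo (0 : ℝ) 1)
    (hM₀ : 0 ≤ M₀) (hMw : 0 ≤ Mw) (hMv : 0 ≤ Mv) (hT : 0 ≤ T)
    (hD : D = αw Mw + αv Mv) (hsbar : sbar = βx M₀ 0 + D / (1 - η))
    (hTcontr : ∀ s ∈ Set.Icc 0 sbar, μ s * φ T ≤ η * s)
    (e : ℕ → ℝ) (he : ∀ k, 0 ≤ e k) (he0 : e 0 ≤ βx M₀ 0 + D)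
    (hrec : ∀ k, e k ≤ sbar → e (k + 1) ≤ μ (e k) * φ T + D) :
    (∀ k, e k ≤ η ^ k * e 0 + D / (1 - η) ∧ e k ≤ sbar) ∧
      Filter.limsup e Filter.atTop ≤ D / (1 - η) := by
  obtain ⟨hη0, hη1⟩ := hη
  have h1η : 0 < 1 - η := by linarith
  have hDpos : 0 ≤ D := by
    have h1 : αw 0 ≤ αw Mw := hαw.2.2.monotoneOn (Set.mem_Ici.2 le_rfl) hMw hMw
    have h2 : αv 0 ≤ αv Mv := hαv.2.2.monotoneOn (Set.mem_Ici.2 le_rfl) hMv hMv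
    rw [hD]; rw [hαw.2.1] at h1; rw [hαv.2.1] at h2; linarith
  have hβ0 : 0 ≤ βx M₀ 0 := by
    have hK := hβx.1 0 le_rfl
    have := hK.2.2.monotoneOn (Set.mem_Ici.2 le_rfl) hM₀ hM₀
    have h0 : βx 0 0 = 0 := hK.2.1
    simp only [h0] at this; exact this
  have bound_sbar : ∀ k : ℕ, η ^ k * e 0 + D * (1 - η ^ k) / (1 - η) ≤ sbar := by
    intro k
    have hηk : (0:ℝ) ≤ η ^ k := pow_nonneg hη0.le k
    have hηk1 : η ^ k ≤ 1 := pow_le_one₀ hη0.le hη1.le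
    have h2 : η ^ k * e 0 ≤ η ^ k * (βx M₀ 0 + D) :=
      mul_le_mul_of_nonneg_left he0 hηk
    have h3 := mul_le_mul_of_nonneg_right h2 h1η.le
    rw [hsbar, add_div' _ _ _ h1η.ne', add_div' _ _ _ h1η.ne',
      div_le_div_iff₀ h1η h1η]
    nlinarith [mul_nonneg (mul_nonneg hβ0 h1η.le) (sub_nonneg.2 hηk1),
      mul_nonneg (mul_nonneg hDpos hηk) hη0.le, mul_pos h1η h1η,
      mul_le_mul_of_nonneg_right h3 h1η.le]
  have key : ∀ k, e k ≤ η ^ k * e 0 + D * (1 - η ^ k) / (1 - η) := by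
    intro k
    induction k with
    | zero => simp
    | succ k ih =>
      have hηk : (0:ℝ) ≤ η ^ k := pow_nonneg hη0.le k
      have hek_sbar : e k ≤ sbar := le_trans ih (bound_sbar k)
      have hstep := hrec k hek_sbar
      have hcontr := hTcontr (e k) ⟨he k, hek_sbar⟩
      calc e (k+1) ≤ η * e k + D := by linarith
        _ ≤ η * (η ^ k * e 0 + D * (1 - η ^ k) / (1 - η)) + D := by nlinarith
        _ = η ^ (k+1) * e 0 + D * (1 - η ^ (k+1)) / (1 - η) := by
            field_simp; ring
  have main : ∀ k, e k ≤ η ^ k * e 0 + D / (1 - η) ∧ e k ≤ sbar := by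
    intro k
    have hηk : (0:ℝ) ≤ η ^ k := pow_nonneg hη0.le k
    have h1 : D * (1 - η ^ k) / (1 - η) ≤ D / (1 - η) := by
      have hηk1 : η ^ k ≤ 1 := pow_le_one₀ hη0.le hη1.le
      rw [div_le_div_iff₀ h1η h1η]
      nlinarith [mul_nonneg (mul_nonneg hDpos h1η.le) hηk]
    exact ⟨le_trans (key k) (by linarith), le_trans (key k) (bound_sbar k)⟩
  refine ⟨main, ?_⟩
  have htend : Tendsto (fun k : ℕ => η ^ k * e 0 + D / (1 - η)) atTop
      (nhds (D / (1 - η))) := by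
    have h0 : Tendsto (fun k : ℕ => η ^ k) atTop (nhds 0) :=
      tendsto_pow_atTop_nhds_zero_of_lt_one hη0.le hη1
    have := (h0.mul_const (e 0)).add_const (D / (1 - η))
    simpa using this
  have hco : Filter.IsCoboundedUnder (· ≤ ·) Filter.atTop e :=
    Filter.IsBoundedUnder.isCoboundedUnder_le ⟨0, Filter.eventually_map.2
      (Filter.Eventually.of_forall he)⟩
  have hbd : Filter.IsBoundedUnder (· ≤ ·) Filter.atTop
      (fun k : ℕ => η ^ k * e 0 + D / (1 - η)) := htend.isBoundedUnder_le
  calc Filter.limsup e Filter.atTop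
      ≤ Filter.limsup (fun k : ℕ => η ^ k * e 0 + D / (1 - η)) Filter.atTop :=
        Filter.limsup_le_limsup (Filter.Eventually.of_forall fun k => (main k).1) hco hbd
    _ = D / (1 - η) := htend.limsup_eq
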